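/- A collapsible cube complex has finite width; specifically, if 𝒞' = 𝒞 ∪ ⋃_i (ℒ_i × 𝓘) is obtained from 𝒞 by gluing products of subcomplexes with an interval, then width(𝒞') ≤ width(𝒞) + 2. -/

import Mathlib

/-- The metric interval between two vertices of a graph (with the path metric). -/
def gInterval {V : Type} (G : SimpleGraph V) (x y : V) : Set V :=
  {w | G.dist x w + G.dist w y = G.dist x y}

/-- A vertex set is convex if it contains all metric intervals between its points. -/
def GConvex {V : Type} (G : SimpleGraph V) (H : Set V) : Prop :=
  ∀ x ∈ H, ∀ y ∈ H, gInterval G x y ⊆ H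

/-- A graph is median if it is connected and every triple of vertices has a unique
median, i.e. a unique vertex lying in all three pairwise metric intervals. -/
def IsMedianGraph {V : Type} (G : SimpleGraph V) : Prop :=
  G.Connected ∧ ∀ x y z : V,
    ∃! w, w ∈ gInterval G x y ∧ w ∈ gInterval G y z ∧ w ∈ gInterval G x z

/-- A vertex set is a halfspace if it and its complement are nonempty and convex. -/
def IsHalfspace {V : Type} (G : SimpleGraph V) (H : Set V) : Prop :=
  H.Nonempty ∧ Hᶜ.Nonempty ∧ GConvex G H ∧ GConvex G Hᶜ

/-- The 1-skeleton of `𝒞 ∪ ⋃ᵢ (ℒᵢ × [0,1])`: for each `j` a new copy of the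
subcomplex `L j` is added, with each new vertex joined to its base vertex. -/
def glueGraph {V : Type} (G : SimpleGraph V) {J : Type} (L : J → Set V) :
    SimpleGraph (V ⊕ Σ j : J, ↥(L j)) :=
  SimpleGraph.fromRel (fun a b =>
    match a, b with
    | .inl a, .inl b => G.Adj a b
    | .inl a, .inr b => a = ↑b.2
    | .inr _, .inl _ => False
    | .inr a, .inr b => a.1 = b.1 ∧ G.Adj ↑a.2 ↑b.2)

-- auxiliary lemmas
namespace GlueAux

variable {V : Type} {G : SimpleGraph V} {J : Type} {L : J → Set V}

lemma adj_inl_inl {a b : V} : (glueGraph G L).Adj (.inl a) (.inl b) ↔ G.Adj a b := by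
  simp only [glueGraph, SimpleGraph.fromRel_adj]
  constructor
  · rintro ⟨-, h | h⟩
    · exact h
    · exact h.symm
  · exact fun h => ⟨by simpa using h.ne, Or.inl h⟩

lemma adj_inl_inr {a : V} {b : Σ j : J, ↥(L j)} :
    (glueGraph G L).Adj (.inl a) (.inr b) ↔ a = ↑b.2 := by
  simp only [glueGraph, SimpleGraph.fromRel_adj]
  constructor
  · rintro ⟨-, h | h⟩
    · exact h
    · exact h.elim
  · exact fun h => ⟨by simp, Or.inl h⟩

lemma adj_inr_inl {a : V} {b : Σ j : J, ↥(L j)} :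
    (glueGraph G L).Adj (.inr b) (.inl a) ↔ a = ↑b.2 :=
  (glueGraph G L).adj_comm _ _ |>.trans adj_inl_inr

lemma adj_inr_inr {a b : Σ j : J, ↥(L j)} :
    (glueGraph G L).Adj (.inr a) (.inr b) ↔ a ≠ b ∧ a.1 = b.1 ∧ G.Adj ↑a.2 ↑b.2 := by
  simp only [glueGraph, SimpleGraph.fromRel_adj, ne_eq, Sum.inr.injEq]
  constructor
  · rintro ⟨hne, h | h⟩
    · exact ⟨hne, h⟩
    · exact ⟨hne, h.1.symm, h.2.symm⟩
  · rintro ⟨hne, h⟩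
    exact ⟨hne, Or.inl h⟩

/-- Projection to the base. -/
def π : (V ⊕ Σ j : J, ↥(L j)) → V
  | .inl a => a
  | .inr b => ↑b.2

open Classical in
noncomputable def δ : (V ⊕ Σ j : J, ↥(L j)) → (V ⊕ Σ j : J, ↥(L j)) → ℕ
  | .inl _, .inl _ => 0
  | .inl _, .inr _ => 1
  | .inr _, .inl _ => 1
  | .inr a, .inr b => if a.1 = b.1 then 0 else 2

lemma δ_self (u : V ⊕ Σ j : J, ↥(L j)) : δ u u = 0 := by
  cases u <;> simp [δ]

lemma adj_cases {u v : V ⊕ Σ j : J, ↥(L j)} (h : (glueGraph G L).Adj u v) :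
    (G.Adj (π u) (π v) ∧ ∀ t, δ u t = δ v t) ∨ (π u = π v ∧ ∀ t, δ u t ≤ δ v t + 1) := by
  match u, v with
  | .inl a, .inl b =>
    refine Or.inl ⟨adj_inl_inl.mp h, fun t => by cases t <;> rfl⟩
  | .inl a, .inr b =>
    refine Or.inr ⟨adj_inl_inr.mp h, fun t => ?_⟩
    cases t with
    | inl => simp [δ]
    | inr c => simp only [δ]; split <;> omega
  | .inr b, .inl a =>
    refine Or.inr ⟨(adj_inr_inl.mp h).symm, fun t => ?_⟩
    cases t with
    | inl => simp [δ]
    | inr c => simp only [δ]; split <;> omega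
  | .inr a, .inr b =>
    obtain ⟨-, h1, h2⟩ := adj_inr_inr.mp h
    refine Or.inl ⟨h2, fun t => ?_⟩
    cases t with
    | inl => rfl
    | inr c => simp only [δ]; rw [h1]

lemma walk_proj {u v : V ⊕ Σ j : J, ↥(L j)} (p : (glueGraph G L).Walk u v) :
    ∃ q : G.Walk (π u) (π v), q.length + δ u v ≤ p.length := by
  induction p with
  | nil => exact ⟨.nil, by simp [δ_self]⟩
  | @cons u u' v h p ih =>
    obtain ⟨q, hq⟩ := ih
    rcases adj_cases h with ⟨ha, hδ⟩ | ⟨he, hδ⟩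
    · exact ⟨.cons ha q, by simp only [SimpleGraph.Walk.length_cons]; rw [hδ v]; omega⟩
    · exact ⟨q.copy he.symm rfl, by simp only [SimpleGraph.Walk.length_copy,
        SimpleGraph.Walk.length_cons]; have := hδ v; omega⟩

end GlueAux

namespace GlueAux2
open GlueAux
variable {V : Type} {G : SimpleGraph V} {J : Type} {L : J → Set V}

/-- inl as a graph homomorphism. -/
def homInl : G →g glueGraph G L :=
  ⟨Sum.inl, fun h => adj_inl_inl.mpr h⟩

lemma reachable_inl (hc : G.Connected) (a b : V) :
    (glueGraph G L).Reachable (.inl a) (.inl b) := by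
  obtain ⟨p⟩ := hc a b
  exact ⟨p.map homInl⟩

lemma adj_down (b : Σ j : J, ↥(L j)) :
    (glueGraph G L).Adj (.inr b) (.inl ↑b.2) := adj_inr_inl.mpr rfl

lemma reachable_all (hc : G.Connected) (u v : V ⊕ Σ j : J, ↥(L j)) :
    (glueGraph G L).Reachable u v := by
  have key : ∀ u : V ⊕ Σ j : J, ↥(L j), (glueGraph G L).Reachable u (.inl (π u)) := by
    intro u
    cases u with
    | inl a => exact SimpleGraph.Reachable.refl _
    | inr b => exact (adj_down b).reachable
  exact ((key u).trans (reachable_inl hc (π u) (π v))).trans (key v).symm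

lemma dist_le_of_walk {u v : V ⊕ Σ j : J, ↥(L j)} (p : (glueGraph G L).Walk u v) :
    (glueGraph G L).dist u v ≤ p.length := SimpleGraph.dist_le p

lemma dist_ge (hc : G.Connected) (u v : V ⊕ Σ j : J, ↥(L j)) :
    G.dist (π u) (π v) + δ u v ≤ (glueGraph G L).dist u v := by
  obtain ⟨p, hp⟩ := (reachable_all hc u v).exists_walk_length_eq_dist
  obtain ⟨q, hq⟩ := walk_proj p
  have := SimpleGraph.dist_le q
  omega

lemma dist_inl_inl (hc : G.Connected) (a b : V) :
    (glueGraph G L).dist (.inl a) (.inl b) = G.dist a b := by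
  have h1 := dist_ge (L := L) hc (.inl a) (.inl b)
  obtain ⟨q, hq⟩ := (hc a b).exists_walk_length_eq_dist
  have h2 : (glueGraph G L).dist (.inl a) (.inl b) ≤ (q.map (homInl (L := L))).length :=
    SimpleGraph.dist_le _
  rw [SimpleGraph.Walk.length_map, hq] at h2
  simp only [π, δ] at h1
  omega

lemma dist_inr_inl (hc : G.Connected) (b : Σ j : J, ↥(L j)) (a : V) :
    (glueGraph G L).dist (.inr b) (.inl a) = G.dist ↑b.2 a + 1 := by
  have h1 := dist_ge (L := L) hc (.inr b) (.inl a)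
  obtain ⟨q, hq⟩ := (hc ↑b.2 a).exists_walk_length_eq_dist
  have h2 : (glueGraph G L).dist (.inr b) (.inl a) ≤
      (SimpleGraph.Walk.cons (adj_down b) (q.map (homInl (L := L)))).length :=
    SimpleGraph.dist_le _
  change _ ≤ (q.map (homInl (L := L))).length + 1 at h2
  rw [SimpleGraph.Walk.length_map, hq] at h2
  simp only [π, δ] at h1
  omega

lemma dist_inr_inr_ne (hc : G.Connected) (b c : Σ j : J, ↥(L j)) (hne : b.1 ≠ c.1) :
    (glueGraph G L).dist (.inr b) (.inr c) = G.dist ↑b.2 ↑c.2 + 2 := by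
  have h1 := dist_ge (L := L) hc (.inr b) (.inr c)
  obtain ⟨q, hq⟩ := (hc ↑b.2 ↑c.2).exists_walk_length_eq_dist
  have h2 : (glueGraph G L).dist (.inr b) (.inr c) ≤ (SimpleGraph.Walk.cons (adj_down b)
      ((q.map (homInl (L := L))).concat (adj_inl_inr.mpr rfl))).length :=
    SimpleGraph.dist_le _
  change _ ≤ ((q.map (homInl (L := L))).concat ((adj_inl_inr (b := c)).mpr rfl)).length + 1 at h2
  have h4 := SimpleGraph.Walk.length_concat (q.map (homInl (L := L))) ((adj_inl_inr (b := c)).mpr rfl)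
  rw [SimpleGraph.Walk.length_map, hq] at h4
  simp only [π, δ, if_neg hne] at h1
  omega

lemma dist_adj {u v : V ⊕ Σ j : J, ↥(L j)} (h : (glueGraph G L).Adj u v) :
    (glueGraph G L).dist u v = 1 := SimpleGraph.dist_eq_one_iff_adj.mpr h

end GlueAux2

namespace GlueAux3
open GlueAux GlueAux2
variable {V : Type} {G : SimpleGraph V} {J : Type} {L : J → Set V}

lemma mem_int_down (hc : G.Connected) (b : Σ j : J, ↥(L j)) (a : V) :
    Sum.inl ↑b.2 ∈ gInterval (glueGraph G L) (Sum.inr b) (Sum.inl a) := by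
  simp only [gInterval, Set.mem_setOf_eq]
  rw [dist_adj (adj_down b), dist_inl_inl hc, dist_inr_inl hc]
  omega

lemma mem_int_down2 (hc : G.Connected) (b c : Σ j : J, ↥(L j)) (hne : b.1 ≠ c.1) :
    Sum.inl ↑b.2 ∈ gInterval (glueGraph G L) (Sum.inr b) (Sum.inr c) := by
  simp only [gInterval, Set.mem_setOf_eq]
  rw [dist_adj (adj_down b), dist_inr_inr_ne hc b c hne, SimpleGraph.dist_comm,
    dist_inr_inl hc, SimpleGraph.dist_comm (u := (↑c.2 : V))]
  omega

lemma mem_int_copy (hc : G.Connected) (b c : Σ j : J, ↥(L j)) (hj : b.1 = c.1)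
    (hadj : G.Adj ↑b.2 ↑c.2) :
    Sum.inr b ∈ gInterval (glueGraph G L) (Sum.inl ↑b.2) (Sum.inr c) := by
  have hbc : b ≠ c := by
    rintro rfl
    exact hadj.ne rfl
  simp only [gInterval, Set.mem_setOf_eq]
  rw [SimpleGraph.dist_comm (u := (Sum.inl ↑b.2 : V ⊕ Σ j : J, ↥(L j))),
    dist_adj (adj_down b), dist_adj (adj_inr_inr.mpr ⟨hbc, hj, hadj⟩),
    SimpleGraph.dist_comm (u := (Sum.inl ↑b.2 : V ⊕ Σ j : J, ↥(L j))),
    dist_inr_inl hc, SimpleGraph.dist_comm (u := (↑c.2 : V)),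
    SimpleGraph.dist_eq_one_iff_adj.mpr hadj]

lemma mem_int_inl (hc : G.Connected) {a b x : V} (h : x ∈ gInterval G a b) :
    Sum.inl x ∈ gInterval (glueGraph G L) (Sum.inl a) (Sum.inl b) := by
  simp only [gInterval, Set.mem_setOf_eq] at h ⊢
  rw [dist_inl_inl hc, dist_inl_inl hc, dist_inl_inl hc]
  exact h

lemma gconvex_restrict (hc : G.Connected) {H : Set (V ⊕ Σ j : J, ↥(L j))}
    (hconv : GConvex (glueGraph G L) H) : GConvex G {a | Sum.inl a ∈ H} := by
  intro x hx y hy z hz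
  exact hconv _ hx _ hy (mem_int_inl hc hz)

lemma inl_mem_of_inr (hc : G.Connected) {H : Set (V ⊕ Σ j : J, ↥(L j))}
    (hconv : GConvex (glueGraph G L) H) {b : Σ j : J, ↥(L j)} (hb : Sum.inr b ∈ H)
    {a : V} (ha : Sum.inl a ∈ H) : Sum.inl ↑b.2 ∈ H :=
  hconv _ hb _ ha (mem_int_down hc b a)

lemma exists_cross_edge {s : Set V} (P : ↥s → Prop) {x y : ↥s}
    (p : (G.induce s).Walk x y) (hx : P x) (hy : ¬ P y) :
    ∃ a b : ↥s, P a ∧ ¬ P b ∧ G.Adj ↑a ↑b := by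
  classical
  revert hx
  induction p with
  | nil => exact fun hx => absurd hx hy
  | @cons u m v h p ih =>
    intro hx
    by_cases hm : P m
    · exact ih hy hm
    · exact ⟨u, m, hx, hm, by simpa using h⟩

lemma inr_mem_iff (hc : G.Connected) {H : Set (V ⊕ Σ j : J, ↥(L j))}
    (hcv : GConvex (glueGraph G L) H) (hccv : GConvex (glueGraph G L) Hᶜ)
    {a a' : V} (ha : Sum.inl a ∈ H) (ha' : Sum.inl a' ∉ H) (b : Σ j : J, ↥(L j)) :
    Sum.inr b ∈ H ↔ Sum.inl ↑b.2 ∈ H := by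
  constructor
  · intro hb
    exact hcv _ hb _ ha (mem_int_down hc b a)
  · intro hb
    by_contra hbn
    exact (hccv _ hbn _ ha' (mem_int_down hc b a')) hb

lemma eq_copy (hc : G.Connected) (hLc : ∀ j, (G.induce (L j)).Connected)
    {H : Set (V ⊕ Σ j : J, ↥(L j))} (hH : IsHalfspace (glueGraph G L) H)
    (hr : ∀ a : V, Sum.inl a ∉ H) :
    ∃ j : J, H = {u | ∃ x : ↥(L j), u = Sum.inr ⟨j, x⟩} := by
  obtain ⟨hne, hcne, hcv, hccv⟩ := hH
  obtain ⟨u, hu⟩ := hne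
  obtain (a | b) := u
  · exact absurd hu (hr a)
  refine ⟨b.1, ?_⟩
  have hsub : ∀ v ∈ H, ∃ x : ↥(L b.1), v = Sum.inr ⟨b.1, x⟩ := by
    intro v hv
    obtain (a | c) := v
    · exact absurd hv (hr a)
    obtain ⟨j, x⟩ := c
    by_cases hj : j = b.1
    · subst hj
      exact ⟨x, rfl⟩
    · exact absurd (hcv _ hv _ hu (mem_int_down2 hc ⟨j, x⟩ b hj)) (hr _)
  ext v
  simp only [Set.mem_setOf_eq]
  constructor
  · exact hsub v
  · rintro ⟨x, rfl⟩
    by_contra hvH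
    have hPb : Sum.inr (⟨b.1, b.2⟩ : Σ j : J, ↥(L j)) ∈ H := hu
    obtain ⟨p⟩ := (hLc b.1).preconnected b.2 x
    obtain ⟨a', b', hPa, hPb', hadj⟩ :=
      exists_cross_edge (fun z : ↥(L b.1) => Sum.inr (⟨b.1, z⟩ : Σ j : J, ↥(L j)) ∈ H)
        p hPb hvH
    have : Sum.inr (⟨b.1, a'⟩ : Σ j : J, ↥(L j)) ∈ Hᶜ :=
      hccv _ (hr ↑a') _ hPb' (mem_int_copy hc ⟨b.1, a'⟩ ⟨b.1, b'⟩ rfl hadj)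
    exact this hPa

end GlueAux3

open GlueAux GlueAux2 GlueAux3

/-- If the median graph `G` (underlying a cube complex `𝒞`) has width at most `w`,
then the complex `𝒞' = 𝒞 ∪ ⋃ᵢ (ℒᵢ × [0,1])` obtained by gluing products of
connected subcomplexes with an interval has width at most `w + 2`. -/
theorem width_glue_le {V : Type} (G : SimpleGraph V) (hG : IsMedianGraph G)
    {J : Type} (L : J → Set V)
    (hL : ∀ j, (L j).Nonempty ∧ (G.induce (L j)).Connected)
    (w : ℕ)
    (hw : ∀ (n : ℕ) (s : Fin n → Set V), StrictMono s →
      (∀ k, IsHalfspace G (s k)) → n ≤ w) :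
    ∀ (n : ℕ) (s : Fin n → Set (V ⊕ Σ j : J, ↥(L j))), StrictMono s →
      (∀ k, IsHalfspace (glueGraph G L) (s k)) → n ≤ w + 2 := by
  classical
  intro n s hmono hhalf
  have hc : G.Connected := hG.1
  set r : Set (V ⊕ Σ j : J, ↥(L j)) → Set V := fun H => {a | Sum.inl a ∈ H} with hr_def
  -- copies are incomparable halfspaces
  have copy_ne : ∀ (k1 k2 : Fin n), k1 < k2 → (∀ a : V, Sum.inl a ∉ s k1) →
      (∀ a : V, Sum.inl a ∉ s k2) → False := by
    intro k1 k2 hlt h1 h2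
    obtain ⟨j1, hj1⟩ := eq_copy hc (fun j => (hL j).2) (hhalf k1) h1
    obtain ⟨j2, hj2⟩ := eq_copy hc (fun j => (hL j).2) (hhalf k2) h2
    have hss := hmono hlt
    obtain ⟨x, hx⟩ := (hL j1).1
    have hm1 : Sum.inr (⟨j1, ⟨x, hx⟩⟩ : Σ j : J, ↥(L j)) ∈ s k1 := by
      rw [hj1]; exact ⟨⟨x, hx⟩, rfl⟩
    have hm2 : Sum.inr (⟨j1, ⟨x, hx⟩⟩ : Σ j : J, ↥(L j)) ∈ s k2 := hss.le hm1
    rw [hj2] at hm2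
    obtain ⟨y, hy⟩ := hm2
    have : j1 = j2 := congrArg Sigma.fst (Sum.inr.inj hy)
    subst this
    exact hss.ne (hj1.trans hj2.symm)
  have compl_half : ∀ k : Fin n, IsHalfspace (glueGraph G L) (s k)ᶜ := by
    intro k
    obtain ⟨h1, h2, h3, h4⟩ := hhalf k
    exact ⟨h2, by rwa [compl_compl], h4, by rwa [compl_compl]⟩
  have cocopy_ne : ∀ (k1 k2 : Fin n), k1 < k2 → (∀ a : V, Sum.inl a ∈ s k1) →
      (∀ a : V, Sum.inl a ∈ s k2) → False := by
    intro k1 k2 hlt h1 h2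
    obtain ⟨j1, hj1⟩ := eq_copy hc (fun j => (hL j).2) (compl_half k1)
      (fun a ha => ha (h1 a))
    obtain ⟨j2, hj2⟩ := eq_copy hc (fun j => (hL j).2) (compl_half k2)
      (fun a ha => ha (h2 a))
    have hss := hmono hlt
    obtain ⟨x, hx⟩ := (hL j2).1
    have hm2 : Sum.inr (⟨j2, ⟨x, hx⟩⟩ : Σ j : J, ↥(L j)) ∈ (s k2)ᶜ := by
      rw [hj2]; exact ⟨⟨x, hx⟩, rfl⟩
    have hm1 : Sum.inr (⟨j2, ⟨x, hx⟩⟩ : Σ j : J, ↥(L j)) ∈ (s k1)ᶜ :=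
      fun hmem => hm2 (hss.le hmem)
    rw [hj1] at hm1
    obtain ⟨y, hy⟩ := hm1
    have : j2 = j1 := congrArg Sigma.fst (Sum.inr.inj hy)
    subst this
    have : s k1 = s k2 := by
      rw [← compl_compl (s k1), ← compl_compl (s k2), hj1, hj2]
    exact hss.ne this
  set A : Finset (Fin n) := Finset.univ.filter (fun k => ¬ (r (s k)).Nonempty) with hA
  set B : Finset (Fin n) := Finset.univ.filter (fun k => ¬ ((r (s k))ᶜ).Nonempty) with hB
  set T : Finset (Fin n) :=
    Finset.univ.filter (fun k => (r (s k)).Nonempty ∧ ((r (s k))ᶜ).Nonempty) with hT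
  have hAcard : A.card ≤ 1 := by
    refine Finset.card_le_one.mpr (fun k1 hk1 k2 hk2 => ?_)
    simp only [hA, Finset.mem_filter, Finset.mem_univ, true_and] at hk1 hk2
    by_contra hne
    rcases lt_or_gt_of_ne hne with h | h
    · exact copy_ne k1 k2 h (fun a ha => hk1 ⟨a, ha⟩) (fun a ha => hk2 ⟨a, ha⟩)
    · exact copy_ne k2 k1 h (fun a ha => hk2 ⟨a, ha⟩) (fun a ha => hk1 ⟨a, ha⟩)
  have hBcard : B.card ≤ 1 := by
    refine Finset.card_le_one.mpr (fun k1 hk1 k2 hk2 => ?_)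
    simp only [hB, Finset.mem_filter, Finset.mem_univ, true_and] at hk1 hk2
    have h1 : ∀ a : V, Sum.inl a ∈ s k1 := by
      intro a
      by_contra ha
      exact hk1 ⟨a, ha⟩
    have h2 : ∀ a : V, Sum.inl a ∈ s k2 := by
      intro a
      by_contra ha
      exact hk2 ⟨a, ha⟩
    by_contra hne
    rcases lt_or_gt_of_ne hne with h | h
    · exact cocopy_ne k1 k2 h h1 h2
    · exact cocopy_ne k2 k1 h h2 h1
  have hTcard : T.card ≤ w := by
    set m := T.card with hm
    set e := T.orderEmbOfFin hm.symm with he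
    set s' : Fin m → Set V := fun i => r (s (e i)) with hs'
    have hmem : ∀ i, e i ∈ T := fun i => T.orderEmbOfFin_mem hm.symm i
    have hmid : ∀ i, (r (s (e i))).Nonempty ∧ ((r (s (e i)))ᶜ).Nonempty := by
      intro i
      have := hmem i
      simp only [hT, Finset.mem_filter, Finset.mem_univ, true_and] at this
      exact this
    have hsm : StrictMono s' := by
      intro i i' hii
      have hkk : e i < e i' := e.strictMono hii
      have hss := hmono hkk
      refine lt_of_le_of_ne (fun a ha => hss.le ha) ?_
      intro heq
      have heq2 : r (s (e i)) = r (s (e i')) := heq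
      apply hss.ne
      obtain ⟨⟨a, haA⟩, ⟨a', haA'⟩⟩ := hmid i
      ext u
      obtain (c | b) := u
      · constructor
        · intro hcm
          have : c ∈ r (s (e i)) := hcm
          exact (heq2 ▸ this : c ∈ r (s (e i')))
        · intro hcm
          have : c ∈ r (s (e i')) := hcm
          exact (heq2 ▸ this : c ∈ r (s (e i)))
      · have hiff1 := inr_mem_iff hc (hhalf (e i)).2.2.1 (hhalf (e i)).2.2.2 haA haA' b
        obtain ⟨⟨a2, haB⟩, ⟨a2', haB'⟩⟩ := hmid i'
        have hiff2 := inr_mem_iff hc (hhalf (e i')).2.2.1 (hhalf (e i')).2.2.2 haB haB' b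
        rw [hiff1, hiff2]
        constructor
        · intro hcm
          have : (↑b.2 : V) ∈ r (s (e i)) := hcm
          exact (heq2 ▸ this : (↑b.2 : V) ∈ r (s (e i')))
        · intro hcm
          have : (↑b.2 : V) ∈ r (s (e i')) := hcm
          exact (heq2 ▸ this : (↑b.2 : V) ∈ r (s (e i)))
    have hhs : ∀ i, IsHalfspace G (s' i) := by
      intro i
      obtain ⟨hne, hcne⟩ := hmid i
      refine ⟨hne, hcne, gconvex_restrict hc (hhalf (e i)).2.2.1, ?_⟩
      have : (r (s (e i)))ᶜ = r ((s (e i))ᶜ) := rfl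
      rw [hs', this]
      exact gconvex_restrict hc (hhalf (e i)).2.2.2
    exact hw m s' hsm hhs
  have hcover : (Finset.univ : Finset (Fin n)) ⊆ T ∪ A ∪ B := by
    intro k _
    by_cases h1 : (r (s k)).Nonempty
    · by_cases h2 : ((r (s k))ᶜ).Nonempty
      · exact Finset.mem_union_left _ (Finset.mem_union_left _
          (by simp only [hT, Finset.mem_filter, Finset.mem_univ, true_and]; exact ⟨h1, h2⟩))
      · exact Finset.mem_union_right _
          (by simp only [hB, Finset.mem_filter, Finset.mem_univ, true_and]; exact h2)
    · exact Finset.mem_union_left _ (Finset.mem_union_right _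
        (by simp only [hA, Finset.mem_filter, Finset.mem_univ, true_and]; exact h1))
  have := Finset.card_le_card hcover
  have h2 := Finset.card_union_le (T ∪ A) B
  have h3 := Finset.card_union_le T A
  rw [Finset.card_fin] at this
  omega
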